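/- For every J > γ/(δ·n), where G is the learned set at the end of the first experiment and δ = max over v ∈ S ∖ G of h(v; G) > 0, cold-starting at experiment J learns strictly more features than in the first experiment: L_cold^(1) ⊊ L_cold^(J). -/

import Mathlib

open Finset

/-- Number of data points in `N` whose feature set contains the feature `v`. -/
def featCount {F X : Type} [DecidableEq F] (feats : X → Finset F)
    (N : Finset X) (v : F) : ℕ :=
  (N.filter fun x => v ∈ feats x).card

/-- `g(v; T, N)`: the frequency of feature `v` among the data points of `N`,
normalized by the size of the full training set `T`. -/
noncomputable def gval {F X : Type} [DecidableEq F] (feats : X → Finset F)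
    (T N : Finset X) (v : F) : ℝ :=
  (featCount feats N v : ℝ) / (T.card : ℝ)

/-- The set of data points of `T` with nonzero gradient: not memorized (not in
`M`) and not well-classified by the learned set `L` (fewer than `τ` of their
features are learned). -/
def active {F X : Type} [DecidableEq F] [DecidableEq X] (feats : X → Finset F) (τ : ℕ)
    (L : Finset F) (M T : Finset X) : Finset X :=
  (T \ M).filter fun x => ((feats x) ∩ L).card < τ

/-- The learned set after the first `i` steps of a run `us` starting from `L0`. -/
def learnedAfter {F : Type} [DecidableEq F] (L0 : Finset F) (us : List F)
    (i : ℕ) : Finset F :=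
  L0 ∪ (us.take i).toFinset

/-- `us` is a valid greedy training run on the dataset `T` with initially
memorized set `M`, starting from the learned set `L0`; `S` is the set of all
features, `τ` the well-classification threshold and `γ` the noise strength.
At every step the model picks a not-yet-learned feature of maximal frequency
`g` among the active (nonzero-gradient) data points; it is learned if its
frequency is at least `γ/|T|`, and at the end of the run every remaining
unlearned feature has frequency below `γ/|T|` (the remaining active points are
then memorized). -/
structure IsRun {F X : Type} [DecidableEq F] [DecidableEq X] (S : Finset F)
    (feats : X → Finset F) (τ : ℕ) (γ : ℝ) (T M : Finset X)
    (L0 : Finset F) (us : List F) : Prop where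
  mem : ∀ i (h : i < us.length), us.get ⟨i, h⟩ ∈ S \ learnedAfter L0 us i
  maximal : ∀ i (h : i < us.length), ∀ u ∈ S \ learnedAfter L0 us i,
    gval feats T (active feats τ (learnedAfter L0 us i) M T) u ≤
      gval feats T (active feats τ (learnedAfter L0 us i) M T) (us.get ⟨i, h⟩)
  threshold : ∀ i (h : i < us.length),
    γ / (T.card : ℝ) ≤
      gval feats T (active feats τ (learnedAfter L0 us i) M T) (us.get ⟨i, h⟩)
  stopped : ∀ u ∈ S \ learnedAfter L0 us us.length,
    gval feats T (active feats τ (learnedAfter L0 us us.length) M T) u <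
      γ / (T.card : ℝ)

/-- The memorized set after a run: the previously memorized points together
with all points that are still active (not well-classified) at the end of the
run. -/
def finalM {F X : Type} [DecidableEq F] [DecidableEq X] (feats : X → Finset F) (τ : ℕ)
    (T M : Finset X) (L0 : Finset F) (us : List F) : Finset X :=
  M ∪ active feats τ (L0 ∪ us.toFinset) M T

/-- The cumulative dataset `T_{1:j}`, the union of the first `j` chunks. -/
def cumT {X : Type} [DecidableEq X] (chunk : ℕ → Finset X) (j : ℕ) : Finset X :=
  (Finset.Icc 1 j).biUnion chunk

/-- `h(v; L)`: the fraction of data points (of one chunk) containing `v` that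
are not well-classified by the learned set `L`. -/
noncomputable def hval {F : Type} [DecidableEq F] (C : ℕ) (Sc : Fin C → Finset F)
    (nA : Fin C → Finset F → ℕ) (τ n : ℕ) (v : F) (L : Finset F) : ℝ :=
  (1 / (n : ℝ)) * ∑ c : Fin C, ∑ A ∈ (Sc c).powerset,
    (nA c A : ℝ) * (if v ∈ A ∧ (A ∩ L).card < τ then 1 else 0)

/-- The test accuracy of a learned feature set `L`. -/
noncomputable def ACC {F : Type} [DecidableEq F] (C : ℕ) (Sc : Fin C → Finset F)
    (nA : Fin C → Finset F → ℕ) (τ n : ℕ) (L : Finset F) : ℝ :=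
  1 - ((C : ℝ) - 1) / (C : ℝ) * ((1 / (n : ℝ)) *
    ∑ c : Fin C, ∑ A ∈ (Sc c).powerset,
      (nA c A : ℝ) * (if (A ∩ L).card < τ then 1 else 0))

/-- class locality of hval -/
lemma hval_inter {F : Type} [DecidableEq F] {C : ℕ} {Sc : Fin C → Finset F}
    (nA : Fin C → Finset F → ℕ) (τ n : ℕ)
    (hdisj : ∀ c c', c ≠ c' → Disjoint (Sc c) (Sc c'))
    {c : Fin C} {v : F} (hv : v ∈ Sc c) (L : Finset F) :
    hval C Sc nA τ n v L = hval C Sc nA τ n v (L ∩ Sc c) := by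
  unfold hval
  congr 1
  refine Finset.sum_congr rfl fun c' _ => Finset.sum_congr rfl fun A hA => ?_
  rw [Finset.mem_powerset] at hA
  by_cases hvA : v ∈ A
  · have hcc : c' = c := by
      by_contra hne
      exact absurd ((hdisj c' c hne).le_bot (Finset.mem_inter.2 ⟨hA hvA, hv⟩)) (Finset.notMem_empty v)
    subst hcc
    have : A ∩ (L ∩ Sc c') = A ∩ L := by
      ext a; simp only [Finset.mem_inter]
      exact ⟨fun ⟨h1, h2, _⟩ => ⟨h1, h2⟩, fun ⟨h1, h2⟩ => ⟨h1, h2, hA h1⟩⟩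
    rw [this]
  · simp [hvA]

/-- a per-class greedy prefix -/
inductive IsPrefix {F : Type} [DecidableEq F] (C : ℕ) (Sc : Fin C → Finset F)
    (nA : Fin C → Finset F → ℕ) (τ n : ℕ) (c : Fin C) : Finset F → Prop
  | nil : IsPrefix C Sc nA τ n c ∅
  | cons (Q : Finset F) (v : F) : IsPrefix C Sc nA τ n c Q → v ∈ Sc c → v ∉ Q →
      (∀ u ∈ Sc c, u ∉ Q → hval C Sc nA τ n u Q ≤ hval C Sc nA τ n v Q) →
      IsPrefix C Sc nA τ n c (insert v Q)

lemma IsPrefix.subset {F : Type} [DecidableEq F] {C : ℕ} {Sc : Fin C → Finset F}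
    {nA : Fin C → Finset F → ℕ} {τ n : ℕ} {c : Fin C} {Q : Finset F}
    (h : IsPrefix C Sc nA τ n c Q) : Q ⊆ Sc c := by
  induction h with
  | nil => exact Finset.empty_subset _
  | cons Q v _ hv _ _ ih => exact Finset.insert_subset hv ih

lemma IsPrefix.eq_of_card_eq {F : Type} [DecidableEq F] {C : ℕ} {Sc : Fin C → Finset F}
    {nA : Fin C → Finset F → ℕ} {τ n : ℕ}
    (hinj : ∀ L : Finset F, L ⊆ Finset.univ.biUnion Sc →
      ∀ c : Fin C, ∀ v₁ ∈ Sc c, ∀ v₂ ∈ Sc c,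
        hval C Sc nA τ n v₁ L = hval C Sc nA τ n v₂ L → v₁ = v₂)
    {c : Fin C} {Q Q' : Finset F}
    (h : IsPrefix C Sc nA τ n c Q) (h' : IsPrefix C Sc nA τ n c Q')
    (hcard : Q.card = Q'.card) : Q = Q' := by
  induction h generalizing Q' with
  | nil =>
    cases h' with
    | nil => rfl
    | cons R w hR hw hwR hmax =>
      rw [Finset.card_empty, Finset.card_insert_of_notMem hwR] at hcard
      omega
  | cons Q v hQ hv hvQ hmax ih =>
    cases h' with
    | nil =>
      rw [Finset.card_empty, Finset.card_insert_of_notMem hvQ] at hcard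
      omega
    | cons R w hR hw hwR hmax' =>
      rw [Finset.card_insert_of_notMem hvQ, Finset.card_insert_of_notMem hwR] at hcard
      have hQR : Q = R := ih hR (by omega)
      subst hQR
      have hsub : Q ⊆ Finset.univ.biUnion Sc := fun a ha =>
        Finset.mem_biUnion.2 ⟨c, Finset.mem_univ c, hQ.subset ha⟩
      have h1 := hmax w hw hwR
      have h2 := hmax' v hv hvQ
      have := hinj Q hsub c v hv w hw (le_antisymm h2 h1)
      rw [this]

lemma IsPrefix.subset_of_card_le {F : Type} [DecidableEq F] {C : ℕ} {Sc : Fin C → Finset F}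
    {nA : Fin C → Finset F → ℕ} {τ n : ℕ}
    (hinj : ∀ L : Finset F, L ⊆ Finset.univ.biUnion Sc →
      ∀ c : Fin C, ∀ v₁ ∈ Sc c, ∀ v₂ ∈ Sc c,
        hval C Sc nA τ n v₁ L = hval C Sc nA τ n v₂ L → v₁ = v₂)
    {c : Fin C} {Q Q' : Finset F}
    (h : IsPrefix C Sc nA τ n c Q) (h' : IsPrefix C Sc nA τ n c Q')
    (hcard : Q.card ≤ Q'.card) : Q ⊆ Q' := by
  induction h' with
  | nil =>
    rw [Finset.card_empty, Nat.le_zero, Finset.card_eq_zero] at hcard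
    simp [hcard]
  | cons R w hR hw hwR hmax ih =>
    rw [Finset.card_insert_of_notMem hwR] at hcard
    rcases Nat.lt_or_ge R.card Q.card with hlt | hle
    · have : Q.card = (insert w R).card := by
        rw [Finset.card_insert_of_notMem hwR]; omega
      exact (h.eq_of_card_eq hinj (IsPrefix.cons R w hR hw hwR hmax) this).le
    · exact (ih hle).trans (Finset.subset_insert _ _)

section Counting
variable {F X : Type} [DecidableEq F] [DecidableEq X]
  {C : ℕ} {Sc : Fin C → Finset F} {label : X → Fin C} {feats : X → Finset F}
  {nA : Fin C → Finset F → ℕ} {chunk : ℕ → Finset X} {n τ : ℕ}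

lemma chunk_count
    (hfeats : ∀ x, feats x ⊆ Sc (label x))
    (hcount : ∀ j, 1 ≤ j → ∀ c : Fin C, ∀ A ∈ (Sc c).powerset,
      ((chunk j).filter fun x => label x = c ∧ feats x = A).card = nA c A)
    {j : ℕ} (hj : 1 ≤ j) (v : F) (L : Finset F) :
    ((chunk j).filter fun x => (feats x ∩ L).card < τ ∧ v ∈ feats x).card
      = ∑ c : Fin C, ∑ A ∈ (Sc c).powerset,
          if v ∈ A ∧ (A ∩ L).card < τ then nA c A else 0 := by
  set s := (chunk j).filter fun x => (feats x ∩ L).card < τ ∧ v ∈ feats x with hs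
  have h1 : s.card = ∑ c : Fin C, (s.filter fun x => label x = c).card :=
    Finset.card_eq_sum_card_fiberwise (fun x _ => Finset.mem_univ _)
  rw [h1]
  refine Finset.sum_congr rfl fun c _ => ?_
  have h2 : (s.filter fun x => label x = c).card
      = ∑ A ∈ (Sc c).powerset, ((s.filter fun x => label x = c).filter
          fun x => feats x = A).card := by
    refine Finset.card_eq_sum_card_fiberwise fun x hx => ?_
    rw [Finset.mem_coe, Finset.mem_filter] at hx
    rw [Finset.mem_coe, Finset.mem_powerset, ← hx.2]
    exact hfeats x
  rw [h2]
  refine Finset.sum_congr rfl fun A hA => ?_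
  rw [Finset.filter_filter, hs, Finset.filter_filter]
  by_cases hq : v ∈ A ∧ (A ∩ L).card < τ
  · rw [if_pos hq, ← hcount j hj c A hA]
    congr 1
    apply Finset.filter_congr
    intro x _
    constructor
    · rintro ⟨⟨_, _⟩, h3, h4⟩; exact ⟨h3, h4⟩
    · rintro ⟨h3, h4⟩; rw [h4]; exact ⟨⟨hq.2, hq.1⟩, h3, rfl⟩
  · rw [if_neg hq, Finset.card_eq_zero, Finset.filter_eq_empty_iff]
    rintro x _ ⟨⟨hv2, hv1⟩, _, hfx⟩
    rw [hfx] at hv1 hv2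
    exact hq ⟨hv1, hv2⟩

lemma cumT_card
    (hchunkdisj : ∀ j j', j ≠ j' → Disjoint (chunk j) (chunk j'))
    (hchunkcard : ∀ j, 1 ≤ j → (chunk j).card = n)
    (j : ℕ) : (cumT chunk j).card = j * n := by
  unfold cumT
  rw [Finset.card_biUnion (fun a _ b _ hab => hchunkdisj a b hab)]
  rw [Finset.sum_congr rfl fun l hl => hchunkcard l (Finset.mem_Icc.1 hl).1]
  rw [Finset.sum_const, Nat.card_Icc, Nat.add_sub_cancel, smul_eq_mul]

lemma gval_eq_hval
    (hfeats : ∀ x, feats x ⊆ Sc (label x))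
    (hcount : ∀ j, 1 ≤ j → ∀ c : Fin C, ∀ A ∈ (Sc c).powerset,
      ((chunk j).filter fun x => label x = c ∧ feats x = A).card = nA c A)
    (hchunkdisj : ∀ j j', j ≠ j' → Disjoint (chunk j) (chunk j'))
    (hchunkcard : ∀ j, 1 ≤ j → (chunk j).card = n)
    (hn0 : 0 < n)
    {j : ℕ} (hj : 1 ≤ j) (L : Finset F) (v : F) :
    gval feats (cumT chunk j) (active feats τ L ∅ (cumT chunk j)) v
      = hval C Sc nA τ n v L := by
  set m := ∑ c : Fin C, ∑ A ∈ (Sc c).powerset,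
      if v ∈ A ∧ (A ∩ L).card < τ then nA c A else 0 with hm
  have hfc : featCount feats (active feats τ L ∅ (cumT chunk j)) v = j * m := by
    unfold featCount active cumT
    rw [Finset.sdiff_empty, Finset.filter_biUnion, Finset.filter_biUnion,
      Finset.card_biUnion]
    · have key : ∀ l ∈ Finset.Icc 1 j,
          ((((chunk l).filter fun x => (feats x ∩ L).card < τ)).filter
            fun x => v ∈ feats x).card = m := by
        intro l hl
        rw [Finset.filter_filter]
        exact chunk_count hfeats hcount (Finset.mem_Icc.1 hl).1 v L
      rw [Finset.sum_congr rfl key, Finset.sum_const, Nat.card_Icc,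
        Nat.add_sub_cancel, smul_eq_mul]
    · intro a _ b _ hab
      exact (hchunkdisj a b hab).mono (Finset.filter_subset _ _ |>.trans
        (Finset.filter_subset _ _)) (Finset.filter_subset _ _ |>.trans
        (Finset.filter_subset _ _))
  unfold gval
  rw [hfc, cumT_card hchunkdisj hchunkcard j]
  have hmr : ((m : ℕ) : ℝ) = ∑ c : Fin C, ∑ A ∈ (Sc c).powerset,
      (nA c A : ℝ) * (if v ∈ A ∧ (A ∩ L).card < τ then 1 else 0) := by
    rw [hm]
    push_cast
    refine Finset.sum_congr rfl fun c _ => Finset.sum_congr rfl fun A _ => ?_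
    split <;> simp
  unfold hval
  rw [← hmr]
  have hje : (j : ℝ) ≠ 0 := Nat.cast_ne_zero.2 (by omega)
  have hne : (n : ℝ) ≠ 0 := Nat.cast_ne_zero.2 (by omega)
  push_cast
  field_simp

lemma crossing (f : ℕ → ℕ) (m : ℕ) :
    ∀ N, f 0 ≤ m → m < f N → ∃ i < N, f i ≤ m ∧ m < f (i + 1) := by
  intro N
  induction N with
  | zero => intro h1 h2; omega
  | succ N ih =>
    intro h1 h2
    by_cases h : m < f N
    · obtain ⟨i, hi, h3, h4⟩ := ih h1 h
      exact ⟨i, by omega, h3, h4⟩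
    · exact ⟨N, by omega, by omega, h2⟩

section Run
variable {F X : Type} [DecidableEq F] [DecidableEq X]
  {C : ℕ} {Sc : Fin C → Finset F} {feats : X → Finset F}
  {nA : Fin C → Finset F → ℕ} {τ n : ℕ} {γ : ℝ} {T : Finset X} {us : List F}

lemma learnedAfter_empty (us : List F) (i : ℕ) :
    learnedAfter (∅ : Finset F) us i = (us.take i).toFinset := by
  simp [learnedAfter]

lemma take_succ_toFinset (us : List F) (i : ℕ) (h : i < us.length) :
    (us.take (i + 1)).toFinset = insert (us.get ⟨i, h⟩) (us.take i).toFinset := by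
  ext a
  rw [List.mem_toFinset, List.take_succ, List.mem_append, Finset.mem_insert,
    List.mem_toFinset, List.getElem?_eq_getElem h]
  simp [or_comm]

lemma run_prefix
    (hdisj : ∀ c c', c ≠ c' → Disjoint (Sc c) (Sc c'))
    (hrun : IsRun (Finset.univ.biUnion Sc) feats τ γ T ∅ ∅ us)
    (hgh : ∀ L v, gval feats T (active feats τ L ∅ T) v = hval C Sc nA τ n v L) :
    ∀ i, i ≤ us.length → ∀ c, IsPrefix C Sc nA τ n c ((us.take i).toFinset ∩ Sc c) := by
  intro i
  induction i with
  | zero => intro _ c; simp only [List.take_zero, List.toFinset_nil,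
      Finset.empty_inter]; exact IsPrefix.nil
  | succ i ih =>
    intro hi c
    have hi' : i < us.length := by omega
    set v := us.get ⟨i, hi'⟩ with hv
    have hmem := hrun.mem i hi'
    rw [Finset.mem_sdiff, learnedAfter_empty] at hmem
    obtain ⟨hvS, hvP⟩ := hmem
    rw [take_succ_toFinset us i hi', ← hv]
    by_cases hvc : v ∈ Sc c
    · rw [Finset.insert_inter_of_mem hvc]
      refine IsPrefix.cons _ v (ih (by omega) c) hvc
        (fun hvQ => hvP (Finset.mem_inter.1 hvQ).1) ?_
      intro u hu huQ
      have huP : u ∉ (us.take i).toFinset := fun huP =>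
        huQ (Finset.mem_inter.2 ⟨huP, hu⟩)
      have huS : u ∈ Finset.univ.biUnion Sc :=
        Finset.mem_biUnion.2 ⟨c, Finset.mem_univ c, hu⟩
      have hmax := hrun.maximal i hi' u (by
        rw [Finset.mem_sdiff, learnedAfter_empty]; exact ⟨huS, huP⟩)
      rw [learnedAfter_empty] at hmax
      rw [hgh, hgh] at hmax
      rw [hval_inter nA τ n hdisj hu, hval_inter nA τ n hdisj hvc] at hmax
      have heq : (us.take i).toFinset ∩ Sc c
          = (us.take i).toFinset ∩ Sc c := rfl
      exact hmax
    · rw [Finset.insert_inter_of_notMem hvc]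
      exact ih (by omega) c

lemma run_next
    (hdisj : ∀ c c', c ≠ c' → Disjoint (Sc c) (Sc c'))
    (hinj : ∀ L : Finset F, L ⊆ Finset.univ.biUnion Sc →
      ∀ c : Fin C, ∀ v₁ ∈ Sc c, ∀ v₂ ∈ Sc c,
        hval C Sc nA τ n v₁ L = hval C Sc nA τ n v₂ L → v₁ = v₂)
    (hrun : IsRun (Finset.univ.biUnion Sc) feats τ γ T ∅ ∅ us)
    (hgh : ∀ L v, gval feats T (active feats τ L ∅ T) v = hval C Sc nA τ n v L)
    {c : Fin C} {Q : Finset F} (hQ : IsPrefix C Sc nA τ n c Q)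
    (hlt : Q.card < (us.toFinset ∩ Sc c).card) :
    ∃ w ∈ Sc c, w ∉ Q ∧ γ / (T.card : ℝ) ≤ hval C Sc nA τ n w Q := by
  set f : ℕ → ℕ := fun i => ((us.take i).toFinset ∩ Sc c).card with hf
  have h0 : f 0 ≤ Q.card := by simp [hf]
  have hN : Q.card < f us.length := by
    simpa [hf, List.take_length] using hlt
  obtain ⟨i, hiN, hle, hgt⟩ := crossing f Q.card us.length h0 hN
  set v := us.get ⟨i, hiN⟩ with hv
  have hmem := hrun.mem i hiN
  rw [Finset.mem_sdiff, learnedAfter_empty] at hmem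
  obtain ⟨hvS, hvP⟩ := hmem
  have hstep : (us.take (i+1)).toFinset = insert v (us.take i).toFinset :=
    take_succ_toFinset us i hiN
  have hvc : v ∈ Sc c := by
    by_contra hvc
    have : f (i+1) = f i := by
      simp only [hf, hstep, Finset.insert_inter_of_notMem hvc]
    omega
  have hvQi : v ∉ (us.take i).toFinset ∩ Sc c := fun h =>
    hvP (Finset.mem_inter.1 h).1
  have hcard : f (i+1) = f i + 1 := by
    simp only [hf, hstep, Finset.insert_inter_of_mem hvc,
      Finset.card_insert_of_notMem hvQi]
  have hfi : f i = Q.card := by omega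
  have hpre : IsPrefix C Sc nA τ n c ((us.take i).toFinset ∩ Sc c) :=
    run_prefix hdisj hrun hgh i (by omega) c
  have hQeq : (us.take i).toFinset ∩ Sc c = Q :=
    hpre.eq_of_card_eq hinj hQ hfi
  refine ⟨v, hvc, fun hvQ => hvQi (hQeq ▸ hvQ), ?_⟩
  have hth := hrun.threshold i hiN
  rw [learnedAfter_empty, hgh] at hth
  rw [hval_inter nA τ n hdisj hvc, hQeq] at hth
  exact hth

end Run


/-- with `G = L_cold^(1)` and
`δ = max_{v ∈ S ∖ G} h(v; G) > 0`, for every `J > γ/(δ·n)` cold-starting at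
experiment `J` learns strictly more features than in the first experiment:
`L_cold^(1) ⊊ L_cold^(J)`. -/
theorem cold_learns_strictly_more
    {F X : Type} [DecidableEq F] [DecidableEq X]
    (C K τ : ℕ) (γ : ℝ) (n : ℕ)
    (Sc : Fin C → Finset F) (label : X → Fin C) (feats : X → Finset F)
    (nA : Fin C → Finset F → ℕ) (chunk : ℕ → Finset X)
    (hγ : 0 < γ) (hτK : τ < K)
    (hK : ∀ c, (Sc c).card = K)
    (hdisjS : ∀ c c', c ≠ c' → Disjoint (Sc c) (Sc c'))
    (hfeats : ∀ x, feats x ⊆ Sc (label x))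
    (hnA : ∀ c, ∀ A ∈ (Sc c).powerset, 1 ≤ nA c A)
    (hn : n = ∑ c : Fin C, ∑ A ∈ (Sc c).powerset, nA c A)
    (hchunkdisj : ∀ j j', j ≠ j' → Disjoint (chunk j) (chunk j'))
    (hchunkcard : ∀ j, 1 ≤ j → (chunk j).card = n)
    (hcount : ∀ j, 1 ≤ j → ∀ c : Fin C, ∀ A ∈ (Sc c).powerset,
      ((chunk j).filter fun x => label x = c ∧ feats x = A).card = nA c A)
    (hC : 0 < C) (hτpos : 0 < τ)
    (hinj : ∀ L : Finset F, L ⊆ Finset.univ.biUnion Sc →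
      ∀ c : Fin C, ∀ v₁ ∈ Sc c, ∀ v₂ ∈ Sc c,
        hval C Sc nA τ n v₁ L = hval C Sc nA τ n v₂ L → v₁ = v₂)
    (hii : ∀ c : Fin C, ∃ v : Fin τ → F, Function.Injective v ∧ (∀ i, v i ∈ Sc c) ∧
      ∀ j, 1 ≤ j →
        ((∀ i : Fin τ, (i : ℕ) + 1 < τ →
            γ / (n : ℝ) ≤ gval feats (chunk j) (chunk j) (v i)) ∧
          gval feats (chunk j) (chunk j)
            (v ⟨τ - 1, Nat.sub_lt hτpos Nat.one_pos⟩) < γ / (n : ℝ)))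
    (usc : ℕ → List F)
    (hcold : ∀ j : ℕ,
      IsRun (Finset.univ.biUnion Sc) feats τ γ (cumT chunk (j + 1)) ∅ ∅ (usc (j + 1)))
    (δ : ℝ) (hδpos : 0 < δ)
    (hδub : ∀ v ∈ Finset.univ.biUnion Sc \ (usc 1).toFinset,
      hval C Sc nA τ n v ((usc 1).toFinset) ≤ δ)
    (hδmem : ∃ v ∈ Finset.univ.biUnion Sc \ (usc 1).toFinset,
      hval C Sc nA τ n v ((usc 1).toFinset) = δ) :
    ∀ J : ℕ, γ / (δ * (n : ℝ)) < (J : ℝ) →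
      (usc 1).toFinset ⊂ (usc J).toFinset := by
  -- basic positivity
  have hn0 : 0 < n := by
    have h1 : 1 ≤ nA ⟨0, hC⟩ ∅ := hnA ⟨0, hC⟩ ∅ (Finset.empty_mem_powerset _)
    have h2 : nA ⟨0, hC⟩ ∅ ≤ ∑ A ∈ (Sc ⟨0, hC⟩).powerset, nA ⟨0, hC⟩ A :=
      Finset.single_le_sum (fun _ _ => Nat.zero_le _) (Finset.empty_mem_powerset _)
    have h3 : (∑ A ∈ (Sc ⟨0, hC⟩).powerset, nA ⟨0, hC⟩ A)
        ≤ ∑ c : Fin C, ∑ A ∈ (Sc c).powerset, nA c A :=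
      Finset.single_le_sum (f := fun c : Fin C => ∑ A ∈ (Sc c).powerset, nA c A)
        (fun _ _ => Nat.zero_le _) (Finset.mem_univ (⟨0, hC⟩ : Fin C))
    omega
  intro J hJ
  have hJ1 : 1 ≤ J := by
    by_contra h
    have hJ0 : J = 0 := by omega
    rw [hJ0] at hJ
    have : 0 < γ / (δ * (n : ℝ)) := by positivity
    simp at hJ
    linarith
  -- the two runs
  have hrun1 : IsRun (Finset.univ.biUnion Sc) feats τ γ (cumT chunk 1) ∅ ∅ (usc 1) :=
    hcold 0
  have hrunJ : IsRun (Finset.univ.biUnion Sc) feats τ γ (cumT chunk J) ∅ ∅ (usc J) := by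
    have := hcold (J - 1)
    rwa [Nat.sub_add_cancel hJ1] at this
  -- gval = hval on cumulative datasets
  have hgh : ∀ j, 1 ≤ j → ∀ (L : Finset F) (v : F),
      gval feats (cumT chunk j) (active feats τ L ∅ (cumT chunk j)) v
        = hval C Sc nA τ n v L := fun j hj L v =>
    gval_eq_hval (label := label) hfeats hcount hchunkdisj hchunkcard hn0 hj L v
  have hcard1 : ((cumT chunk 1).card : ℝ) = (n : ℝ) := by
    rw [cumT_card hchunkdisj hchunkcard 1]; push_cast; ring
  have hcardJ : ((cumT chunk J).card : ℝ) = (J : ℝ) * (n : ℝ) := by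
    rw [cumT_card hchunkdisj hchunkcard J]; push_cast; ring
  set G := (usc 1).toFinset with hG
  set LJ := (usc J).toFinset with hLJ
  have hlaJ : learnedAfter (∅ : Finset F) (usc J) (usc J).length = LJ := by
    rw [learnedAfter_empty, List.take_length]
  -- Part A : G ⊆ LJ
  have hsub : G ⊆ LJ := by
    intro v hv
    obtain ⟨i, hvi⟩ := List.mem_iff_get.1 (List.mem_toFinset.1 hv)
    have hvS : v ∈ Finset.univ.biUnion Sc := by
      have h := hrun1.mem i.1 i.2
      rw [Finset.mem_sdiff] at h
      rw [Fin.eta, hvi] at h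
      exact h.1
    obtain ⟨c, _, hvc⟩ := Finset.mem_biUnion.1 hvS
    have hpre1 : IsPrefix C Sc nA τ n c (G ∩ Sc c) := by
      have := run_prefix hdisjS hrun1 (hgh 1 le_rfl) (usc 1).length le_rfl c
      rwa [List.take_length] at this
    have hpreJ : IsPrefix C Sc nA τ n c (LJ ∩ Sc c) := by
      have := run_prefix hdisjS hrunJ (hgh J hJ1) (usc J).length le_rfl c
      rwa [List.take_length] at this
    have hkey : (G ∩ Sc c).card ≤ (LJ ∩ Sc c).card := by
      by_contra hcont
      push_neg at hcont
      obtain ⟨w, hwc, hwQ, hwval⟩ := run_next hdisjS hinj hrun1 (hgh 1 le_rfl)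
        hpreJ hcont
      have hwLJ : w ∉ LJ := fun h => hwQ (Finset.mem_inter.2 ⟨h, hwc⟩)
      have hwS : w ∈ Finset.univ.biUnion Sc :=
        Finset.mem_biUnion.2 ⟨c, Finset.mem_univ c, hwc⟩
      have hstop := hrunJ.stopped w (by
        rw [hlaJ, Finset.mem_sdiff]; exact ⟨hwS, hwLJ⟩)
      rw [hlaJ, hgh J hJ1, hval_inter nA τ n hdisjS hwc] at hstop
      rw [hcard1] at hwval
      rw [hcardJ] at hstop
      have hle : γ / ((J : ℝ) * (n : ℝ)) ≤ γ / (n : ℝ) := by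
        apply div_le_div_of_nonneg_left hγ.le (by positivity)
        have : (1 : ℝ) ≤ (J : ℝ) := by exact_mod_cast hJ1
        nlinarith [(Nat.cast_pos (α := ℝ)).2 hn0]
      linarith
    have := hpre1.subset_of_card_le hinj hpreJ hkey
    exact (Finset.mem_inter.1 (this (Finset.mem_inter.2 ⟨hv, hvc⟩))).1
  -- Part B : strictness
  refine Finset.ssubset_iff_subset_ne.2 ⟨hsub, fun heq => ?_⟩
  obtain ⟨v0, hv0S, hv0δ⟩ := hδmem
  rw [Finset.mem_sdiff] at hv0S
  have hstop := hrunJ.stopped v0 (by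
    rw [hlaJ, Finset.mem_sdiff, ← heq]; exact ⟨hv0S.1, hv0S.2⟩)
  rw [hlaJ, hgh J hJ1, ← heq, hv0δ, hcardJ] at hstop
  have hJn : (0 : ℝ) < (J : ℝ) * (n : ℝ) := by
    have : (1 : ℝ) ≤ (J : ℝ) := by exact_mod_cast hJ1
    nlinarith [(Nat.cast_pos (α := ℝ)).2 hn0]
  rw [lt_div_iff₀ hJn] at hstop
  rw [div_lt_iff₀ (by positivity : (0:ℝ) < δ * (n:ℝ))] at hJ
  nlinarith
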